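/- Let k > 0 and R > 0. There exists a constant C > 0 such that for all x, y in EuclideanSpace ℝ (Fin 3) with ‖y‖ ≤ R and ‖x‖ ≥ 2R, one has |‖x‖·e^{k‖x‖}·e^{−k‖x−y‖}/‖x − y‖ − e^{k·⟪x,y⟫/‖x‖}| ≤ C/‖x‖, where all exponentials here are real exponentials. -/

import Mathlib

open scoped RealInnerProductSpace

set_option maxHeartbeats 1000000 in
/-- Uniform far-field asymptotics of the fundamental solution of the modified Helmholtz
equation in three dimensions:
`‖x‖·e^{k‖x‖}·e^{-k‖x-y‖}/‖x-y‖ = e^{k⟪x,y⟫/‖x‖} + O(1/‖x‖)` uniformly for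
`‖y‖ ≤ R` and `‖x‖ ≥ 2R`, with real exponentials. -/
theorem modified_helmholtz_fundamental_farfield (k R : ℝ) (hk : 0 < k) (hR : 0 < R) :
    ∃ C : ℝ, 0 < C ∧ ∀ x y : EuclideanSpace ℝ (Fin 3), ‖y‖ ≤ R → 2 * R ≤ ‖x‖ →
      |‖x‖ * Real.exp (k * ‖x‖) * Real.exp (-(k * ‖x - y‖)) / ‖x - y‖
        - Real.exp (k * (⟪x, y⟫ / ‖x‖))| ≤ C / ‖x‖ := by
  refine ⟨2 * R * Real.exp (k * R) * (k * R + 1), by positivity, ?_⟩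
  intro x y hy hx
  set r : ℝ := ‖x‖ with hrdef
  set d : ℝ := ‖x - y‖ with hddef
  have hr0 : 0 < r := lt_of_lt_of_le (by positivity) hx
  have hrd : |r - d| ≤ ‖y‖ := by
    have h := abs_norm_sub_norm_le x (x - y)
    simpa using h
  have hrd' : |r - d| ≤ R := hrd.trans hy
  have hd2 : r / 2 ≤ d := by
    rcases abs_le.mp hrd' with ⟨h1, h2⟩
    linarith
  have hd0 : 0 < d := lt_of_lt_of_le (by linarith) hd2
  have hcs : |⟪x, y⟫| ≤ r * ‖y‖ := abs_real_inner_le_norm x y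
  set p : ℝ := ⟪x, y⟫ / r with hpdef
  have hpy : |p| ≤ ‖y‖ := by
    rw [hpdef, abs_div, abs_of_pos hr0, div_le_iff₀ hr0]
    calc |⟪x, y⟫| ≤ r * ‖y‖ := hcs
      _ = ‖y‖ * r := mul_comm _ _
  have hpR : |p| ≤ R := hpy.trans hy
  have hpR1 := abs_le.mp hpR
  set s : ℝ := r - p with hsdef
  have hs2 : r / 2 ≤ s := by
    simp only [hsdef]; linarith [hpR1.2]
  have hs0 : 0 < s := lt_of_lt_of_le (by linarith) hs2
  have hip : ⟪x, y⟫ = p * r := by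
    rw [hpdef, div_mul_cancel₀ _ hr0.ne']
  have hnorm : d ^ 2 = r ^ 2 - 2 * (p * r) + ‖y‖ ^ 2 := by
    rw [hddef, hrdef, ← hip]
    exact norm_sub_sq_real x y
  have hy0 : 0 ≤ ‖y‖ := norm_nonneg y
  have hds_ub : d ^ 2 - s ^ 2 ≤ R ^ 2 := by
    have : p ^ 2 ≤ ‖y‖ ^ 2 := by nlinarith [abs_nonneg p, sq_abs p, sq_abs ‖y‖]
    nlinarith
  have hds_lb : 0 ≤ d ^ 2 - s ^ 2 := by
    have : p ^ 2 ≤ ‖y‖ ^ 2 := by nlinarith [abs_nonneg p, sq_abs p, sq_abs ‖y‖]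
    nlinarith
  have hsd : s ≤ d := by
    have hsq : s ^ 2 ≤ d ^ 2 := by linarith
    calc s = Real.sqrt (s ^ 2) := (Real.sqrt_sq hs0.le).symm
      _ ≤ Real.sqrt (d ^ 2) := Real.sqrt_le_sqrt hsq
      _ = d := Real.sqrt_sq hd0.le
  have hdsr : d - s ≤ R ^ 2 / r := by
    rw [le_div_iff₀ hr0]
    nlinarith
  -- key factorization
  have key : r * Real.exp (k * r) * Real.exp (-(k * d)) / d - Real.exp (k * p)
      = Real.exp (k * p) * (r / d * Real.exp (-(k * (d - s))) - 1) := by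
    have he : Real.exp (k * r) * Real.exp (-(k * d))
        = Real.exp (k * p) * Real.exp (-(k * (d - s))) := by
      rw [← Real.exp_add, ← Real.exp_add]
      congr 1
      simp only [hsdef]; ring
    rw [mul_assoc r, he]
    field_simp
  rw [key, abs_mul, Real.abs_exp]
  -- bound each factor
  have hexp : Real.exp (k * p) ≤ Real.exp (k * R) := by
    apply Real.exp_le_exp.2
    exact mul_le_mul_of_nonneg_left (le_of_abs_le hpR) hk.le
  set t : ℝ := k * (d - s) with htdef
  have ht0 : 0 ≤ t := mul_nonneg hk.le (by linarith)
  have htle : t ≤ k * R ^ 2 / r := by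
    rw [htdef, div_eq_mul_inv, mul_assoc, ← div_eq_mul_inv]
    exact mul_le_mul_of_nonneg_left hdsr hk.le
  have hexpt : |Real.exp (-t) - 1| ≤ t := by
    rw [abs_sub_comm, abs_of_nonneg (by have := Real.exp_le_one_iff.mpr (neg_nonpos.2 ht0); linarith)]
    linarith [Real.add_one_le_exp (-t)]
  have hrd2 : r / d ≤ 2 := by
    rw [div_le_iff₀ hd0]; linarith
  have hrd1 : |r / d - 1| ≤ 2 * R / r := by
    rw [show r / d - 1 = (r - d) / d by field_simp, abs_div, abs_of_pos hd0,
      div_le_div_iff₀ hd0 hr0]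
    calc |r - d| * r ≤ R * r := mul_le_mul_of_nonneg_right hrd' hr0.le
      _ ≤ 2 * R * d := by nlinarith
  have hQ : |r / d * Real.exp (-t) - 1| ≤ (2 * k * R ^ 2 + 2 * R) / r := by
    have h1 : r / d * Real.exp (-t) - 1
        = r / d * (Real.exp (-t) - 1) + (r / d - 1) := by ring
    rw [h1]
    calc |r / d * (Real.exp (-t) - 1) + (r / d - 1)|
        ≤ |r / d * (Real.exp (-t) - 1)| + |r / d - 1| := abs_add_le _ _
      _ = r / d * |Real.exp (-t) - 1| + |r / d - 1| := by
          rw [abs_mul, abs_of_pos (div_pos hr0 hd0)]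
      _ ≤ 2 * (k * R ^ 2 / r) + 2 * R / r := by
          have h2 : r / d * |Real.exp (-t) - 1| ≤ 2 * (k * R ^ 2 / r) :=
            mul_le_mul hrd2 (hexpt.trans htle) (abs_nonneg _) (by norm_num)
          linarith [hrd1]
      _ = (2 * k * R ^ 2 + 2 * R) / r := by ring
  calc Real.exp (k * p) * |r / d * Real.exp (-t) - 1|
      ≤ Real.exp (k * R) * ((2 * k * R ^ 2 + 2 * R) / r) := by
        exact mul_le_mul hexp hQ (abs_nonneg _) (Real.exp_pos _).le
    _ = 2 * R * Real.exp (k * R) * (k * R + 1) / r := by ring
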